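/- The 6-dimensional free 2-step nilpotent Lie algebra n_{3,2} on three generators admits an ad-invariant nondegenerate symmetric bilinear form. Concretely, with basis e_1,…,e_6 and brackets [e_1,e_2]=e_4, [e_1,e_3]=e_5, [e_2,e_3]=e_6, the bilinear form B with B(e_1,e_6)=B(e_3,e_4)=1, B(e_2,e_5)=−1, symmetric, and all other pairings of basis vectors zero, is nondegenerate and satisfies B([x,y],z) = −B(y,[x,z]) for all x,y,z. -/

import Mathlib

set_option maxRecDepth 20000 in
set_option maxHeartbeats 2000000 in
/-- The free 2-step nilpotent Lie algebra on three generators n_{3,2} admits an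
ad-invariant nondegenerate symmetric bilinear form, concretely given on the basis
e₁,…,e₆ by B(e₁,e₆)=B(e₃,e₄)=1, B(e₂,e₅)=−1, all other pairings zero. -/
theorem n32_admits_ad_invariant_metric
    {K L : Type*} [Field K] [CharZero K] [LieRing L] [LieAlgebra K L]
    [FiniteDimensional K L]
    (b : Module.Basis (Fin 6) K L)
    (h12 : ⁅b 0, b 1⁆ = b 3) (h13 : ⁅b 0, b 2⁆ = b 4) (h23 : ⁅b 1, b 2⁆ = b 5)
    (hz : ∀ i j : Fin 6, 3 ≤ j.val → ⁅b i, b j⁆ = 0) :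
    ∃ B : L →ₗ[K] L →ₗ[K] K,
      (∀ x y : L, B x y = B y x) ∧
      (∀ x : L, (∀ y : L, B x y = 0) → x = 0) ∧
      (∀ x y z : L, B ⁅x, y⁆ z = - B y ⁅x, z⁆) ∧
      (∀ i j : Fin 6, B (b i) (b j) =
        (!![0, 0, 0, 0, 0, 1;
            0, 0, 0, 0, -1, 0;
            0, 0, 0, 1, 0, 0;
            0, 0, 1, 0, 0, 0;
            0, -1, 0, 0, 0, 0;
            1, 0, 0, 0, 0, 0] : Matrix (Fin 6) (Fin 6) K) i j) := by
  set M : Matrix (Fin 6) (Fin 6) K :=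
        !![0, 0, 0, 0, 0, 1;
            0, 0, 0, 0, -1, 0;
            0, 0, 0, 1, 0, 0;
            0, 0, 1, 0, 0, 0;
            0, -1, 0, 0, 0, 0;
            1, 0, 0, 0, 0, 0] with hM
  set B : L →ₗ[K] L →ₗ[K] K := Matrix.toLinearMap₂ b b M with hB
  have hbasis : ∀ i j, B (b i) (b j) = M i j := by
    intro i j
    simp [hB, Matrix.toLinearMap₂_apply, Finsupp.single_apply]
  -- bracket facts
  have h21 : ⁅b 1, b 0⁆ = -(b 3) := by rw [← lie_skew, h12]
  have h31 : ⁅b 2, b 0⁆ = -(b 4) := by rw [← lie_skew, h13]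
  have h32 : ⁅b 2, b 1⁆ = -(b 5) := by rw [← lie_skew, h23]
  have z3 : ∀ i, ⁅b i, b 3⁆ = 0 := fun i => hz i 3 (by decide)
  have z4 : ∀ i, ⁅b i, b 4⁆ = 0 := fun i => hz i 4 (by decide)
  have z5 : ∀ i, ⁅b i, b 5⁆ = 0 := fun i => hz i 5 (by decide)
  have w3 : ∀ j, ⁅b 3, b j⁆ = 0 := fun j => by rw [← lie_skew, z3 j, neg_zero]
  have w4 : ∀ j, ⁅b 4, b j⁆ = 0 := fun j => by rw [← lie_skew, z4 j, neg_zero]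
  have w5 : ∀ j, ⁅b 5, b j⁆ = 0 := fun j => by rw [← lie_skew, z5 j, neg_zero]
  -- value table
  have Bv00 : B (b 0) (b 0) = 0 := (hbasis 0 0).trans rfl
  have Bv01 : B (b 0) (b 1) = 0 := (hbasis 0 1).trans rfl
  have Bv02 : B (b 0) (b 2) = 0 := (hbasis 0 2).trans rfl
  have Bv03 : B (b 0) (b 3) = 0 := (hbasis 0 3).trans rfl
  have Bv04 : B (b 0) (b 4) = 0 := (hbasis 0 4).trans rfl
  have Bv05 : B (b 0) (b 5) = 1 := (hbasis 0 5).trans rfl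
  have Bv10 : B (b 1) (b 0) = 0 := (hbasis 1 0).trans rfl
  have Bv11 : B (b 1) (b 1) = 0 := (hbasis 1 1).trans rfl
  have Bv12 : B (b 1) (b 2) = 0 := (hbasis 1 2).trans rfl
  have Bv13 : B (b 1) (b 3) = 0 := (hbasis 1 3).trans rfl
  have Bv14 : B (b 1) (b 4) = -1 := (hbasis 1 4).trans rfl
  have Bv15 : B (b 1) (b 5) = 0 := (hbasis 1 5).trans rfl
  have Bv20 : B (b 2) (b 0) = 0 := (hbasis 2 0).trans rfl
  have Bv21 : B (b 2) (b 1) = 0 := (hbasis 2 1).trans rfl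
  have Bv22 : B (b 2) (b 2) = 0 := (hbasis 2 2).trans rfl
  have Bv23 : B (b 2) (b 3) = 1 := (hbasis 2 3).trans rfl
  have Bv24 : B (b 2) (b 4) = 0 := (hbasis 2 4).trans rfl
  have Bv25 : B (b 2) (b 5) = 0 := (hbasis 2 5).trans rfl
  have Bv30 : B (b 3) (b 0) = 0 := (hbasis 3 0).trans rfl
  have Bv31 : B (b 3) (b 1) = 0 := (hbasis 3 1).trans rfl
  have Bv32 : B (b 3) (b 2) = 1 := (hbasis 3 2).trans rfl
  have Bv33 : B (b 3) (b 3) = 0 := (hbasis 3 3).trans rfl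
  have Bv34 : B (b 3) (b 4) = 0 := (hbasis 3 4).trans rfl
  have Bv35 : B (b 3) (b 5) = 0 := (hbasis 3 5).trans rfl
  have Bv40 : B (b 4) (b 0) = 0 := (hbasis 4 0).trans rfl
  have Bv41 : B (b 4) (b 1) = -1 := (hbasis 4 1).trans rfl
  have Bv42 : B (b 4) (b 2) = 0 := (hbasis 4 2).trans rfl
  have Bv43 : B (b 4) (b 3) = 0 := (hbasis 4 3).trans rfl
  have Bv44 : B (b 4) (b 4) = 0 := (hbasis 4 4).trans rfl
  have Bv45 : B (b 4) (b 5) = 0 := (hbasis 4 5).trans rfl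
  have Bv50 : B (b 5) (b 0) = 1 := (hbasis 5 0).trans rfl
  have Bv51 : B (b 5) (b 1) = 0 := (hbasis 5 1).trans rfl
  have Bv52 : B (b 5) (b 2) = 0 := (hbasis 5 2).trans rfl
  have Bv53 : B (b 5) (b 3) = 0 := (hbasis 5 3).trans rfl
  have Bv54 : B (b 5) (b 4) = 0 := (hbasis 5 4).trans rfl
  have Bv55 : B (b 5) (b 5) = 0 := (hbasis 5 5).trans rfl
  -- key identity on basis vectors
  have key : ∀ i j k : Fin 6, B ⁅b i, b j⁆ (b k) = - B (b j) ⁅b i, b k⁆ := by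
    intro i j k
    fin_cases i <;> fin_cases j <;> fin_cases k <;>
      simp only [Fin.isValue, Fin.reduceFinMk, h12, h13, h23, h21, h31, h32,
        z3, z4, z5, w3, w4, w5, lie_self,
        map_zero, map_neg, LinearMap.zero_apply, LinearMap.neg_apply, neg_zero, neg_neg,
        Bv00, Bv01, Bv02, Bv03, Bv04, Bv05, Bv10, Bv11, Bv12, Bv13, Bv14, Bv15, Bv20, Bv21, Bv22, Bv23, Bv24, Bv25, Bv30, Bv31, Bv32, Bv33, Bv34, Bv35, Bv40, Bv41, Bv42, Bv43, Bv44, Bv45, Bv50, Bv51, Bv52, Bv53, Bv54, Bv55]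
  -- symmetry
  have hsymm : ∀ x y : L, B x y = B y x := by
    have hBflip : B = B.flip := by
      apply LinearMap.ext_basis b b
      intro i j
      rw [LinearMap.flip_apply]
      fin_cases i <;> fin_cases j <;>
        simp only [Fin.isValue, Fin.reduceFinMk,
          Bv00, Bv01, Bv02, Bv03, Bv04, Bv05, Bv10, Bv11, Bv12, Bv13, Bv14, Bv15, Bv20, Bv21, Bv22, Bv23, Bv24, Bv25, Bv30, Bv31, Bv32, Bv33, Bv34, Bv35, Bv40, Bv41, Bv42, Bv43, Bv44, Bv45, Bv50, Bv51, Bv52, Bv53, Bv54, Bv55]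
    intro x y
    conv_lhs => rw [hBflip]
    rfl
  -- nondegeneracy
  have hexp : ∀ (x : L) (k : Fin 6), B x (b k) = ∑ i, b.repr x i * B (b i) (b k) := by
    intro x k
    conv_lhs => rw [← b.sum_repr x]
    simp only [map_sum, LinearMap.sum_apply, map_smul, LinearMap.smul_apply, smul_eq_mul]
  have hnd : ∀ x : L, (∀ y : L, B x y = 0) → x = 0 := by
    intro x hx
    have H : ∀ k, ∑ i, b.repr x i * B (b i) (b k) = 0 :=
      fun k => (hexp x k).symm.trans (hx (b k))
    have e0 := H 5
    have e1 := H 4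
    have e2 := H 3
    have e3 := H 2
    have e4 := H 1
    have e5 := H 0
    simp only [Fin.sum_univ_six,
      Bv00, Bv01, Bv02, Bv03, Bv04, Bv05, Bv10, Bv11, Bv12, Bv13, Bv14, Bv15,
      Bv20, Bv21, Bv22, Bv23, Bv24, Bv25, Bv30, Bv31, Bv32, Bv33, Bv34, Bv35,
      Bv40, Bv41, Bv42, Bv43, Bv44, Bv45, Bv50, Bv51, Bv52, Bv53, Bv54, Bv55,
      mul_zero, mul_one, zero_add, add_zero, mul_neg, mul_neg_one, neg_eq_zero] at e0 e1 e2 e3 e4 e5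
    have hrepr : b.repr x = 0 := by
      ext i
      fin_cases i <;>
        simp only [Fin.reduceFinMk, Finsupp.coe_zero, Pi.zero_apply, Fin.isValue] <;>
        assumption
    simpa using congrArg b.repr.symm hrepr
  refine ⟨B, hsymm, hnd, ?_, fun i j => hbasis i j⟩
  -- ad-invariance via trilinear extension
  have hT : (LinearMap.mk₂ K (fun x y => B ⁅x, y⁆)
      (fun x x' y => by simp only [add_lie, map_add])
      (fun c x y => by simp only [smul_lie, map_smul])
      (fun x y y' => by simp only [lie_add, map_add])
      (fun c x y => by simp only [lie_smul, map_smul]) : L →ₗ[K] L →ₗ[K] L →ₗ[K] K) =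
      (LinearMap.mk₂ K (fun x y => -((B y).comp (LieAlgebra.ad K L x)))
      (fun x x' y => by ext z; simp [add_lie]; ring)
      (fun c x y => by ext z; simp [smul_lie])
      (fun x y y' => by ext z; simp; ring)
      (fun c x y => by ext z; simp) : L →ₗ[K] L →ₗ[K] L →ₗ[K] K) := by
    apply LinearMap.ext_basis b b
    intro i j
    apply Module.Basis.ext b
    intro k
    simp only [LinearMap.mk₂_apply, LinearMap.neg_apply, LinearMap.comp_apply,
      LieAlgebra.ad_apply]
    exact key i j k
  intro x y z
  have hxyz := LinearMap.congr_fun (LinearMap.congr_fun (LinearMap.congr_fun hT x) y) z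
  simpa only [LinearMap.mk₂_apply, LinearMap.neg_apply, LinearMap.comp_apply,
    LieAlgebra.ad_apply] using hxyz
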